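/- arXiv:1803.07511 — 3 statements merged into one kernel-verified Lean document; each statement's English description precedes it below -/
import Mathlib

section
/- Let G be a locally compact group, σ a continuous involutive automorphism of G with fixed point group H, and Γ a σ-stable discrete subgroup of G such that Γ\G is compact. Then (Γ ∩ H)\H is compact. -/
private theorem aux_cover {G : Type*} [Group G] [TopologicalSpace G] [IsTopologicalGroup G]
    [LocallyCompactSpace G] (Γ : Subgroup G) [CompactSpace (G ⧸ Γ)] :
    ∃ C : Set G, IsCompact C ∧ QuotientGroup.mk (s := Γ) '' C = Set.univ := by
  have hopen : IsOpenMap (QuotientGroup.mk (s := Γ)) := QuotientGroup.isOpenMap_coe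
  choose K hKc hKn using fun g : G => exists_compact_mem_nhds g
  obtain ⟨t, ht⟩ := isCompact_univ.elim_finite_subcover
    (fun g : G => QuotientGroup.mk (s := Γ) '' interior (K g))
    (fun g => hopen _ isOpen_interior)
    (by
      rintro x -
      obtain ⟨g, rfl⟩ := QuotientGroup.mk_surjective x
      exact Set.mem_iUnion.2 ⟨g, Set.mem_image_of_mem _ (mem_interior_iff_mem_nhds.2 (hKn g))⟩)
  refine ⟨⋃ g ∈ t, K g, t.isCompact_biUnion (fun g _ => hKc g), ?_⟩
  apply Set.eq_univ_of_univ_subset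
  intro x hx
  obtain ⟨g, hg, ⟨y, hy, rfl⟩⟩ := Set.mem_iUnion₂.1 (ht hx)
  exact Set.mem_image_of_mem _ (Set.mem_biUnion hg (interior_subset hy))




/-- If `σ` is a continuous involutive automorphism of a locally compact
group `G` with fixed point subgroup `H`, and `Γ` is a `σ`-stable discrete subgroup
with compact quotient, then `(Γ ∩ H)\H` is compact. -/
theorem stmt_0 {G : Type*} [Group G] [TopologicalSpace G] [IsTopologicalGroup G]
    [T2Space G] [LocallyCompactSpace G]
    (σ : G →* G) (hσcont : Continuous σ) (hσinv : ∀ g : G, σ (σ g) = g)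
    (H : Subgroup G) (hH : ∀ g : G, g ∈ H ↔ σ g = g)
    (Γ : Subgroup G) [DiscreteTopology Γ]
    (hstab : ∀ γ ∈ Γ, σ γ ∈ Γ)
    [CompactSpace (G ⧸ Γ)] :
    CompactSpace (↥H ⧸ Γ.subgroupOf H) := by
  classical
  set φ : G → G := fun g => g⁻¹ * σ g with hφdef
  have hφcont : Continuous φ := continuous_inv.mul hσcont
  have hHclosed : IsClosed (H : Set G) := by
    have : (H : Set G) = {g | σ g = g} := Set.ext fun g => hH g
    rw [this]; exact isClosed_eq hσcont continuous_id
  obtain ⟨C₀, hC₀c, hC₀⟩ := aux_cover Γ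
  set C : Set G := C₀ ∩ φ ⁻¹' (Γ : Set G) with hCdef
  have hCc : IsCompact C := hC₀c.inter_right (Subgroup.isClosed_of_discrete.preimage hφcont)
  have hfin : (φ '' C).Finite := by
    have hsub : φ '' C ⊆ (Γ : Set G) := by rintro _ ⟨c, hc, rfl⟩; exact hc.2
    have : DiscreteTopology ↥(φ '' C) :=
      DiscreteTopology.of_subset (inferInstance : DiscreteTopology ↥(Γ : Set G)) hsub
    exact (hCc.image hφcont).finite (isDiscrete_iff_discreteTopology.mpr this)
  have choice : ∀ t : G, ∃ δ : G, (∃ γ ∈ Γ, t = γ⁻¹ * σ γ) → δ ∈ Γ ∧ t = δ⁻¹ * σ δ := by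
    intro t
    by_cases h : ∃ γ ∈ Γ, t = γ⁻¹ * σ γ
    · obtain ⟨γ, hγ, ht⟩ := h; exact ⟨γ, fun _ => ⟨hγ, ht⟩⟩
    · exact ⟨1, fun h' => absurd h' h⟩
  choose δ hδ using choice
  set K : Set G := (⋃ t ∈ φ '' C, (fun c => c * (δ t)⁻¹) '' C) ∩ (H : Set G) with hKdef
  have hKc : IsCompact K := by
    apply IsCompact.inter_right _ hHclosed
    exact hfin.isCompact_biUnion (fun t _ => hCc.image (continuous_mul_right _))
  have hKH : K ⊆ (H : Set G) := Set.inter_subset_right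
  have hcover : ∀ h ∈ H, ∃ k ∈ K, k⁻¹ * h ∈ Γ := by
    intro h hh
    have hmem : (QuotientGroup.mk h : G ⧸ Γ) ∈ QuotientGroup.mk '' C₀ :=
      hC₀ ▸ Set.mem_univ _
    obtain ⟨c₀, hc₀, hmk⟩ := hmem
    have hγ : c₀⁻¹ * h ∈ Γ := QuotientGroup.eq.1 hmk
    set γ : G := (c₀⁻¹ * h)⁻¹ with hγdef
    have hγΓ : γ ∈ Γ := Γ.inv_mem hγ
    have hc₀eq : c₀ = h * γ := by simp [hγdef, mul_assoc]
    have hσh : σ h = h := (hH h).1 hh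
    have hφc₀ : φ c₀ = γ⁻¹ * σ γ := by
      simp [hφdef, hc₀eq, map_mul, hσh, mul_assoc]
    have hc₀C : c₀ ∈ C := ⟨hc₀, by
      rw [Set.mem_preimage, hφc₀]
      exact Γ.mul_mem (Γ.inv_mem hγΓ) (hstab γ hγΓ)⟩
    obtain ⟨hδΓ, hteq⟩ := hδ (φ c₀) ⟨γ, hγΓ, hφc₀⟩
    set d := δ (φ c₀) with hddef
    set k := c₀ * d⁻¹ with hkdef
    have hσc₀ : σ c₀ = c₀ * φ c₀ := by simp [hφdef, mul_inv_cancel_left]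
    have hkH : k ∈ H := by
      rw [hH, hkdef, map_mul, map_inv, hσc₀, hteq]
      group
    refine ⟨k, ⟨Set.mem_biUnion (Set.mem_image_of_mem φ hc₀C) ⟨c₀, hc₀C, rfl⟩, hkH⟩, ?_⟩
    have hk' : k⁻¹ * h = d * γ⁻¹ := by rw [hkdef, hc₀eq]; group
    rw [hk']
    exact Γ.mul_mem hδΓ (Γ.inv_mem hγΓ)
  have hvalK : IsCompact ((Subtype.val : ↥H → G) ⁻¹' K) :=
    (hHclosed.isClosedEmbedding_subtypeVal).isCompact_preimage hKc
  have hsurj : Set.univ ⊆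
      (QuotientGroup.mk : ↥H → ↥H ⧸ Γ.subgroupOf H) '' (Subtype.val ⁻¹' K) := by
    rintro x -
    obtain ⟨h, rfl⟩ := QuotientGroup.mk_surjective x
    obtain ⟨k, hk, hkh⟩ := hcover h.1 h.2
    refine ⟨⟨k, hKH hk⟩, hk, ?_⟩
    apply QuotientGroup.eq.2
    rw [Subgroup.mem_subgroupOf]
    exact hkh
  refine ⟨?_⟩
  rw [← Set.eq_univ_of_univ_subset hsurj]
  exact hvalK.image continuous_quotient_mk'
end

section
/- Let G = G₁ × G₂ be a product of locally compact groups with G₂ compact, and let Γ be a discrete subgroup of G such that Γ\G is compact. Then the projection Γ₁ of Γ to G₁ is a discrete subgroup of G₁ and Γ₁\G₁ is compact. -/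
open Set

/-- A subset of a locally compact T2 space whose intersection with every compact set is
finite is discrete. -/
lemma aux_discrete_of_finite_inter {G : Type*} [TopologicalSpace G] [T2Space G]
    [LocallyCompactSpace G] {S : Set G}
    (h : ∀ K : Set G, IsCompact K → (S ∩ K).Finite) : DiscreteTopology S := by
  rw [discreteTopology_iff_isOpen_singleton]
  rintro ⟨x, hx⟩
  obtain ⟨K, hKn, hK⟩ := exists_compact_mem_nhds x
  have hfin : ((S ∩ K) \ {x}).Finite := (h K hKn).diff
  have hT : IsClosed ((S ∩ K) \ {x}) := hfin.isClosed
  set U : Set G := interior K \ ((S ∩ K) \ {x}) with hU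
  have hUopen : IsOpen U := isOpen_interior.sdiff hT
  have heq : ({⟨x, hx⟩} : Set S) = Subtype.val ⁻¹' U := by
    ext ⟨y, hy⟩
    simp only [mem_singleton_iff, Subtype.mk.injEq, mem_preimage]
    constructor
    · rintro rfl
      exact ⟨mem_interior_iff_mem_nhds.2 hK, by simp⟩
    · rintro ⟨hy1, hy2⟩
      by_contra hne
      exact hy2 ⟨⟨hy, interior_subset hy1⟩, hne⟩
  rw [heq]
  exact hUopen.preimage continuous_subtype_val

/-- If `G = G₁ × G₂` with `G₂` compact and `Γ` is a discrete cocompact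
subgroup of `G`, then the projection `Γ₁` of `Γ` to `G₁` is discrete and cocompact. -/
theorem stmt_1 {G₁ G₂ : Type*}
    [Group G₁] [TopologicalSpace G₁] [IsTopologicalGroup G₁] [T2Space G₁]
    [LocallyCompactSpace G₁]
    [Group G₂] [TopologicalSpace G₂] [IsTopologicalGroup G₂] [T2Space G₂]
    [LocallyCompactSpace G₂] [CompactSpace G₂]
    (Γ : Subgroup (G₁ × G₂)) [DiscreteTopology Γ]
    [CompactSpace ((G₁ × G₂) ⧸ Γ)] :
    DiscreteTopology ↥(Γ.map (MonoidHom.fst G₁ G₂)) ∧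
      CompactSpace (G₁ ⧸ Γ.map (MonoidHom.fst G₁ G₂)) := by
  have hclosed : IsClosed (Γ : Set (G₁ × G₂)) := Subgroup.isClosed_of_discrete
  constructor
  · -- discreteness
    refine aux_discrete_of_finite_inter ?_
    intro K hK
    have hKc : IsCompact ((K ×ˢ (Set.univ : Set G₂)) ∩ (Γ : Set (G₁ × G₂))) :=
      (hK.prod isCompact_univ).inter_right hclosed
    have hdisc : DiscreteTopology ((K ×ˢ (Set.univ : Set G₂)) ∩ (Γ : Set (G₁ × G₂)) : Set _) :=
      DiscreteTopology.of_subset (inferInstance : DiscreteTopology Γ) inter_subset_right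
    have hfin := hKc.finite (isDiscrete_iff_discreteTopology.mpr hdisc)
    refine (hfin.image Prod.fst).subset ?_
    rintro x ⟨hxΓ, hxK⟩
    obtain ⟨⟨γ1, γ2⟩, hγ, rfl⟩ := hxΓ
    exact ⟨(γ1, γ2), ⟨⟨hxK, trivial⟩, hγ⟩, rfl⟩
  · -- cocompactness
    set Γ₁ := Γ.map (MonoidHom.fst G₁ G₂)
    have hrel : Relator.LiftFun (QuotientGroup.leftRel Γ).r (QuotientGroup.leftRel Γ₁).r Prod.fst Prod.fst := by
      intro x y hxy
      rw [QuotientGroup.leftRel_apply] at hxy ⊢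
      exact ⟨x⁻¹ * y, hxy, rfl⟩
    let F : ((G₁ × G₂) ⧸ Γ) → (G₁ ⧸ Γ₁) := Quotient.map' Prod.fst hrel
    have hFc : Continuous F := continuous_fst.quotient_map' hrel
    have hFs : Function.Surjective F := by
      intro q
      obtain ⟨g₁, rfl⟩ := QuotientGroup.mk_surjective q
      exact ⟨QuotientGroup.mk (g₁, 1), rfl⟩
    constructor
    rw [← hFs.range_eq, ← Set.image_univ]
    exact isCompact_univ.image hFc
end

section
/- Let G = G₁ × G₂ with G₂ a compact Hausdorff group, and let Γ be a torsion-free discrete subgroup of G. Then the projection Γ₁ of Γ to G₁ is torsion-free. -/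
/-- If `G = G₁ × G₂` with `G₂` compact Hausdorff and `Γ` is a
torsion-free discrete subgroup of `G`, then the projection of `Γ` to `G₁` is
torsion-free. -/
theorem stmt_2 {G₁ G₂ : Type*}
    [Group G₁] [TopologicalSpace G₁] [IsTopologicalGroup G₁]
    [Group G₂] [TopologicalSpace G₂] [IsTopologicalGroup G₂]
    [CompactSpace G₂] [T2Space G₂]
    (Γ : Subgroup (G₁ × G₂)) [DiscreteTopology Γ]
    (htf : ∀ γ ∈ Γ, ∀ n : ℕ, 0 < n → γ ^ n = 1 → γ = 1) :
    ∀ γ₁ ∈ Γ.map (MonoidHom.fst G₁ G₂), ∀ n : ℕ, 0 < n → γ₁ ^ n = 1 → γ₁ = 1 := by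
  rintro γ₁ hγ₁ n hn hpow
  obtain ⟨γ, hγ, rfl⟩ := hγ₁
  -- The fiber subgroup Δ = {g : (1, g) ∈ Γ} of G₂
  set Δ : Subgroup G₂ := Γ.comap (MonoidHom.inr G₁ G₂) with hΔ
  -- Δ is discrete: it embeds in Γ, which is discrete
  haveI : DiscreteTopology Δ := by
    refine DiscreteTopology.of_continuous_injective (β := Γ)
      (f := fun g : Δ => (⟨(1, g.1), g.2⟩ : Γ)) ?_ ?_
    · exact Continuous.subtype_mk (continuous_const.prodMk continuous_subtype_val) _
    · intro a b hab
      ext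
      exact congrArg (fun x : Γ => x.1.2) hab
  -- Δ is closed in G₂, hence compact, hence finite
  haveI : Finite Δ := by
    have hc : IsCompact (Δ : Set G₂) := Subgroup.isClosed_of_discrete.isCompact
    haveI : CompactSpace Δ := isCompact_iff_compactSpace.mp hc
    exact finite_of_compact_of_discrete
  -- γ ^ n = (1, γ.2 ^ n) lies in {1} × Δ
  have hmem : γ.2 ^ n ∈ Δ := by
    have : γ ^ n ∈ Γ := Γ.pow_mem hγ n
    have h1 : γ ^ n = (1, γ.2 ^ n) := by
      have : (γ ^ n).1 = γ.1 ^ n := rfl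
      ext
      · simpa [this] using hpow
      · rfl
    rw [h1] at this
    simpa [hΔ] using this
  -- finite order in the finite group Δ
  obtain ⟨m, hm, hmeq⟩ : ∃ m : ℕ, 0 < m ∧ (γ.2 ^ n) ^ m = 1 := by
    have := orderOf_pos (⟨γ.2 ^ n, hmem⟩ : Δ)
    refine ⟨orderOf (⟨γ.2 ^ n, hmem⟩ : Δ), this, ?_⟩
    have := pow_orderOf_eq_one (⟨γ.2 ^ n, hmem⟩ : Δ)
    exact congrArg Subtype.val this
  -- now γ ^ (n * m) = 1, so γ = 1 by torsion-freeness
  have hγ1 : γ = 1 := by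
    refine htf γ hγ (n * m) (Nat.mul_pos hn hm) ?_
    have hpow' : γ.1 ^ n = 1 := hpow
    have h1 : γ.1 ^ (n * m) = 1 := by rw [pow_mul, hpow', one_pow]
    have h2 : γ.2 ^ (n * m) = 1 := by rw [pow_mul, hmeq]
    ext
    · simpa using h1
    · simpa using h2
  rw [hγ1]
  rfl
end
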